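/- Let H_U ∈ ℝ^{n_U×n_U}, H_V ∈ ℝ^{n_V×n_V}, H_U^Γ ∈ ℝ^{m_U×m_U}, H_V^Γ ∈ ℝ^{m_V×m_V} be symmetric positive definite. Let e_E, d_E ∈ ℝ^{n_U×m_U} and e_W, d_W ∈ ℝ^{n_V×m_V}, and suppose there exist symmetric positive semidefinite M_U ∈ ℝ^{n_U×n_U} and M_V ∈ ℝ^{n_V×n_V} with H_U D_Δ^U = e_E H_U^Γ d_Eᵀ − M_U and H_V D_Δ^V = e_W H_V^Γ d_Wᵀ − M_V. Let the interpolation matrices I_{v2u}^g, I_{v2u}^b ∈ ℝ^{m_U×m_V} and I_{u2v}^g, I_{u2v}^b ∈ ℝ^{m_V×m_U} satisfy H_U^Γ I_{v2u}^b = (I_{u2v}^g)ᵀ H_V^Γ and (I_{v2u}^g)ᵀ H_U^Γ = H_V^Γ I_{u2v}^b. Let a, b ∈ ℂ with Re a ≥ 0 and Re b ≥ 0, and let u: ℝ → ℂ^{n_U}, v: ℝ → ℂ^{n_V} be differentiable and satisfy the semi-discrete scheme u' = a D_Δ^U u − (1/2) ā H_U^{-1} d_E H_U^Γ (e_Eᵀu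 − I_{v2u}^g e_Wᵀv) − (1/2) H_U^{-1} e_E H_U^Γ (a d_Eᵀu + b I_{v2u}^b d_Wᵀv) and v' = b D_Δ^V v − (1/2) b̄ H_V^{-1} d_W H_V^Γ (e_Wᵀv − I_{u2v}^g e_Eᵀu) − (1/2) H_V^{-1} e_W H_V^Γ (b d_Wᵀv + a I_{u2v}^b d_Eᵀu). Then d/dt (u* H_U u + v* H_V v) = −(a+ā) u* M_U u − (b+b̄) v* M_V v ≤ 0 for all t. -/

import Mathlib

open Matrix ComplexOrder ComplexConjugate

/-- Complexification of a real matrix. -/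
def cm {m n : Type*} (A : Matrix m n ℝ) : Matrix m n ℂ := A.map (fun r => (r : ℂ))

lemma cm_eq {m n : Type*} (A : Matrix m n ℝ) : cm A = A.map (⇑Complex.ofRealHom) := rfl

lemma cm_mul {m n o : Type*} [Fintype n] (A : Matrix m n ℝ) (B : Matrix n o ℝ) :
    cm (A * B) = cm A * cm B := by
  simp [cm_eq, Matrix.map_mul]

lemma cm_transpose {m n : Type*} (A : Matrix m n ℝ) : cm Aᵀ = (cm A)ᵀ := rfl

lemma cm_sub {m n : Type*} (A B : Matrix m n ℝ) : cm (A - B) = cm A - cm B := by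
  ext i j; simp [cm]

lemma cm_conjTranspose {m n : Type*} (A : Matrix m n ℝ) : (cm A)ᴴ = cm Aᵀ := by
  ext i j; simp [cm, conjTranspose]

lemma cm_mul_inv_cancel {n : ℕ} {A : Matrix (Fin n) (Fin n) ℝ} (hA : A.PosDef) :
    cm A * (cm A)⁻¹ = 1 := by
  apply Matrix.mul_nonsing_inv
  have hd : (cm A).det = (A.det : ℂ) := by
    rw [cm_eq, ← RingHom.mapMatrix_apply, ← RingHom.map_det]; rfl
  rw [hd]
  simp only [isUnit_iff_ne_zero, ne_eq, Complex.ofReal_eq_zero]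
  exact hA.det_pos.ne'

lemma real_symm {n : ℕ} {A : Matrix (Fin n) (Fin n) ℝ} (h : A.IsHermitian) : Aᵀ = A := by
  ext i j
  rw [Matrix.transpose_apply]
  conv_rhs => rw [← h]
  simp [Matrix.conjTranspose_apply]

open scoped MatrixOrder in
lemma cm_posSemidef {n : ℕ} {A : Matrix (Fin n) (Fin n) ℝ} (hA : A.PosSemidef) :
    (cm A).PosSemidef := by
  have h := Matrix.posSemidef_conjTranspose_mul_self (cm (CFC.sqrt A))
  rw [cm_conjTranspose, real_symm (CFC.sqrt_nonneg A).posSemidef.1, ← cm_mul,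
    CFC.sqrt_mul_sqrt_self A hA.nonneg] at h
  exact h

lemma conj_form {m k : ℕ} (M : Matrix (Fin m) (Fin k) ℂ) (x : Fin m → ℂ) (y : Fin k → ℂ) :
    conj (star x ⬝ᵥ M *ᵥ y) = star y ⬝ᵥ Mᴴ *ᵥ x := by
  have h1 : star x ⬝ᵥ M *ᵥ y = star (star (M *ᵥ y) ⬝ᵥ x) := Matrix.star_dotProduct x (M *ᵥ y)
  have h2 : conj (star x ⬝ᵥ M *ᵥ y) = star (M *ᵥ y) ⬝ᵥ x := by
    rw [h1]; exact star_star _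
  rw [h2, Matrix.star_mulVec, ← Matrix.dotProduct_mulVec]

lemma real_shift {m k : ℕ} (A : Matrix (Fin m) (Fin k) ℝ) (x : Fin m → ℂ) (z : Fin k → ℂ) :
    star x ⬝ᵥ (cm A) *ᵥ z = star ((cm A)ᵀ *ᵥ x) ⬝ᵥ z := by
  rw [← cm_transpose, Matrix.star_mulVec, cm_conjTranspose, Matrix.transpose_transpose,
    Matrix.dotProduct_mulVec]

lemma deriv_quad {n : ℕ} (A : Matrix (Fin n) (Fin n) ℂ) {u : ℝ → Fin n → ℂ} {u' : Fin n → ℂ}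
    {t : ℝ} (hu : HasDerivAt u u' t) :
    HasDerivAt (fun s => star (u s) ⬝ᵥ A *ᵥ u s)
      (star u' ⬝ᵥ A *ᵥ u t + star (u t) ⬝ᵥ A *ᵥ u') t := by
  have hcomp : ∀ i, HasDerivAt (fun s => u s i) (u' i) t := hasDerivAt_pi.mp hu
  have key : ∀ i, HasDerivAt (fun s => (starRingEnd ℂ) (u s i) * ∑ j, A i j * u s j)
      ((starRingEnd ℂ) (u' i) * ∑ j, A i j * u t j
        + (starRingEnd ℂ) (u t i) * ∑ j, A i j * u' j) t := by
    intro i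
    have h1 : HasDerivAt (fun s => (starRingEnd ℂ) (u s i)) ((starRingEnd ℂ) (u' i)) t := by
      simpa using (hcomp i).star
    have h2 : HasDerivAt (fun s => ∑ j, A i j * u s j) (∑ j, A i j * u' j) t :=
      HasDerivAt.fun_sum (fun j _ => (hcomp j).const_mul (A i j))
    exact h1.mul h2
  have := HasDerivAt.fun_sum (fun i (_ : i ∈ Finset.univ) => key i)
  simpa [dotProduct, Matrix.mulVec, Finset.sum_add_distrib] using this

/-- Energy stability of the SBP-SAT semi-discretization of `u_t = aΔu`, `v_t = bΔv`
coupled at a non-conforming interface with order preserving interpolation operators and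
penalty parameters `τ_u = σ_u = τ_v = σ_v = −1/2`: the discrete energy
`u* H_U u + v* H_V v` satisfies
`d/dt (u* H_U u + v* H_V v) = −(a+ā) u* M_U u − (b+b̄) v* M_V v ≤ 0`. -/
theorem stmt7 {nU nV mU mV : ℕ}
    (HU : Matrix (Fin nU) (Fin nU) ℝ) (HV : Matrix (Fin nV) (Fin nV) ℝ)
    (HUΓ : Matrix (Fin mU) (Fin mU) ℝ) (HVΓ : Matrix (Fin mV) (Fin mV) ℝ)
    (hHU : HU.PosDef) (hHV : HV.PosDef) (hHUΓ : HUΓ.PosDef) (hHVΓ : HVΓ.PosDef)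
    (eE dE : Matrix (Fin nU) (Fin mU) ℝ) (eW dW : Matrix (Fin nV) (Fin mV) ℝ)
    (DΔU : Matrix (Fin nU) (Fin nU) ℝ) (DΔV : Matrix (Fin nV) (Fin nV) ℝ)
    (MU : Matrix (Fin nU) (Fin nU) ℝ) (MV : Matrix (Fin nV) (Fin nV) ℝ)
    (hMU : MU.PosSemidef) (hMV : MV.PosSemidef)
    (hSBPU : HU * DΔU = eE * HUΓ * dEᵀ - MU)
    (hSBPV : HV * DΔV = eW * HVΓ * dWᵀ - MV)
    (Ivug Ivub : Matrix (Fin mU) (Fin mV) ℝ) (Iuvg Iuvb : Matrix (Fin mV) (Fin mU) ℝ)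
    (hadj1 : HUΓ * Ivub = Iuvgᵀ * HVΓ)
    (hadj2 : Ivugᵀ * HUΓ = HVΓ * Iuvb)
    (a b : ℂ) (ha : 0 ≤ a.re) (hb : 0 ≤ b.re)
    (u : ℝ → Fin nU → ℂ) (v : ℝ → Fin nV → ℂ)
    (hu : ∀ t : ℝ, HasDerivAt u
      (a • ((cm DΔU) *ᵥ u t)
        - ((1 : ℂ) / 2) • (conj a •
            ((cm HU)⁻¹ *ᵥ ((cm dE) *ᵥ ((cm HUΓ) *ᵥ
              ((cm eE)ᵀ *ᵥ u t - (cm Ivug) *ᵥ ((cm eW)ᵀ *ᵥ v t))))))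
        - ((1 : ℂ) / 2) •
            ((cm HU)⁻¹ *ᵥ ((cm eE) *ᵥ ((cm HUΓ) *ᵥ
              (a • ((cm dE)ᵀ *ᵥ u t) + b • ((cm Ivub) *ᵥ ((cm dW)ᵀ *ᵥ v t))))))) t)
    (hv : ∀ t : ℝ, HasDerivAt v
      (b • ((cm DΔV) *ᵥ v t)
        - ((1 : ℂ) / 2) • (conj b •
            ((cm HV)⁻¹ *ᵥ ((cm dW) *ᵥ ((cm HVΓ) *ᵥ
              ((cm eW)ᵀ *ᵥ v t - (cm Iuvg) *ᵥ ((cm eE)ᵀ *ᵥ u t))))))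
        - ((1 : ℂ) / 2) •
            ((cm HV)⁻¹ *ᵥ ((cm eW) *ᵥ ((cm HVΓ) *ᵥ
              (b • ((cm dW)ᵀ *ᵥ v t) + a • ((cm Iuvb) *ᵥ ((cm dE)ᵀ *ᵥ u t))))))) t) :
    ∀ t : ℝ,
      HasDerivAt (fun s => star (u s) ⬝ᵥ (cm HU) *ᵥ u s + star (v s) ⬝ᵥ (cm HV) *ᵥ v s)
        (-((a + conj a) * (star (u t) ⬝ᵥ (cm MU) *ᵥ u t))
          - (b + conj b) * (star (v t) ⬝ᵥ (cm MV) *ᵥ v t)) t ∧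
      -((a + conj a) * (star (u t) ⬝ᵥ (cm MU) *ᵥ u t))
          - (b + conj b) * (star (v t) ⬝ᵥ (cm MV) *ᵥ v t) ≤ 0 := by
  intro t
  have hu' := hu t
  have hv' := hv t
  set Fu := (a • ((cm DΔU) *ᵥ u t)
        - ((1 : ℂ) / 2) • (conj a •
            ((cm HU)⁻¹ *ᵥ ((cm dE) *ᵥ ((cm HUΓ) *ᵥ
              ((cm eE)ᵀ *ᵥ u t - (cm Ivug) *ᵥ ((cm eW)ᵀ *ᵥ v t))))))
        - ((1 : ℂ) / 2) •
            ((cm HU)⁻¹ *ᵥ ((cm eE) *ᵥ ((cm HUΓ) *ᵥ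
              (a • ((cm dE)ᵀ *ᵥ u t) + b • ((cm Ivub) *ᵥ ((cm dW)ᵀ *ᵥ v t))))))) with hFu
  set Fv := (b • ((cm DΔV) *ᵥ v t)
        - ((1 : ℂ) / 2) • (conj b •
            ((cm HV)⁻¹ *ᵥ ((cm dW) *ᵥ ((cm HVΓ) *ᵥ
              ((cm eW)ᵀ *ᵥ v t - (cm Iuvg) *ᵥ ((cm eE)ᵀ *ᵥ u t))))))
        - ((1 : ℂ) / 2) •
            ((cm HV)⁻¹ *ᵥ ((cm eW) *ᵥ ((cm HVΓ) *ᵥ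
              (b • ((cm dW)ᵀ *ᵥ v t) + a • ((cm Iuvb) *ᵥ ((cm dE)ᵀ *ᵥ u t))))))) with hFv
  set U := u t with hUdef
  set V := v t with hVdef
  set G := cm HUΓ with hGdef
  set K := cm HVΓ with hKdef
  set P := cm Ivug with hPdef
  set Q := cm Ivub with hQdef
  set R := cm Iuvg with hRdef
  set S := cm Iuvb with hSdef
  set U0 := (cm eE)ᵀ *ᵥ U with hU0def
  set U1 := (cm dE)ᵀ *ᵥ U with hU1def
  set V0 := (cm eW)ᵀ *ᵥ V with hV0def
  set V1 := (cm dW)ᵀ *ᵥ V with hV1def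
  set qU := star U ⬝ᵥ (cm MU) *ᵥ U with hqUdef
  set qV := star V ⬝ᵥ (cm MV) *ᵥ V with hqVdef
  -- hermitian complexifications
  have hGh : Gᴴ = G := by rw [hGdef, cm_conjTranspose, real_symm hHUΓ.1]
  have hKh : Kᴴ = K := by rw [hKdef, cm_conjTranspose, real_symm hHVΓ.1]
  have hHUh : (cm HU)ᴴ = cm HU := by rw [cm_conjTranspose, real_symm hHU.1]
  have hHVh : (cm HV)ᴴ = cm HV := by rw [cm_conjTranspose, real_symm hHV.1]
  have hMUh : (cm MU)ᴴ = cm MU := by rw [cm_conjTranspose, real_symm hMU.1]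
  have hMVh : (cm MV)ᴴ = cm MV := by rw [cm_conjTranspose, real_symm hMV.1]
  -- inverse cancellation
  have hcanU : ∀ w, cm HU *ᵥ ((cm HU)⁻¹ *ᵥ w) = w := by
    intro w; rw [Matrix.mulVec_mulVec, cm_mul_inv_cancel hHU, Matrix.one_mulVec]
  have hcanV : ∀ w, cm HV *ᵥ ((cm HV)⁻¹ *ᵥ w) = w := by
    intro w; rw [Matrix.mulVec_mulVec, cm_mul_inv_cancel hHV, Matrix.one_mulVec]
  -- SBP rewriting of HU *ᵥ (DΔU *ᵥ U)
  have hXU : cm HU *ᵥ (cm DΔU *ᵥ U) = cm eE *ᵥ (G *ᵥ U1) - cm MU *ᵥ U := by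
    rw [hGdef, hU1def]
    simp only [Matrix.mulVec_mulVec]
    rw [← cm_mul, hSBPU, cm_sub, Matrix.sub_mulVec]
    congr 2
    rw [cm_mul, cm_mul, cm_transpose, Matrix.mul_assoc]
  have hXV : cm HV *ᵥ (cm DΔV *ᵥ V) = cm eW *ᵥ (K *ᵥ V1) - cm MV *ᵥ V := by
    rw [hKdef, hV1def]
    simp only [Matrix.mulVec_mulVec]
    rw [← cm_mul, hSBPV, cm_sub, Matrix.sub_mulVec]
    congr 2
    rw [cm_mul, cm_mul, cm_transpose, Matrix.mul_assoc]
  -- shifting real matrices across the sesquilinear pairing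
  have sE : ∀ z, star U ⬝ᵥ cm eE *ᵥ z = star U0 ⬝ᵥ z := fun z => by
    rw [real_shift, ← hU0def]
  have sD : ∀ z, star U ⬝ᵥ cm dE *ᵥ z = star U1 ⬝ᵥ z := fun z => by
    rw [real_shift, ← hU1def]
  have sW : ∀ z, star V ⬝ᵥ cm eW *ᵥ z = star V0 ⬝ᵥ z := fun z => by
    rw [real_shift, ← hV0def]
  have sDW : ∀ z, star V ⬝ᵥ cm dW *ᵥ z = star V1 ⬝ᵥ z := fun z => by
    rw [real_shift, ← hV1def]
  -- the two "one-sided" energy rates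
  have hTu : star U ⬝ᵥ cm HU *ᵥ Fu
      = a * (star U0 ⬝ᵥ G *ᵥ U1) - a * qU
        - ((1:ℂ)/2) * (conj a * (star U1 ⬝ᵥ G *ᵥ U0 - star U1 ⬝ᵥ G *ᵥ (P *ᵥ V0)))
        - ((1:ℂ)/2) * (a * (star U0 ⬝ᵥ G *ᵥ U1) + b * (star U0 ⬝ᵥ G *ᵥ (Q *ᵥ V1))) := by
    rw [hFu]
    simp only [Matrix.mulVec_sub, Matrix.mulVec_add, Matrix.mulVec_smul, hcanU, hXU,
      dotProduct_sub, dotProduct_add, dotProduct_smul, smul_eq_mul,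
      sE, sD, ← hqUdef]
    ring
  have hTv : star V ⬝ᵥ cm HV *ᵥ Fv
      = b * (star V0 ⬝ᵥ K *ᵥ V1) - b * qV
        - ((1:ℂ)/2) * (conj b * (star V1 ⬝ᵥ K *ᵥ V0 - star V1 ⬝ᵥ K *ᵥ (R *ᵥ U0)))
        - ((1:ℂ)/2) * (b * (star V0 ⬝ᵥ K *ᵥ V1) + a * (star V0 ⬝ᵥ K *ᵥ (S *ᵥ U1))) := by
    rw [hFv]
    simp only [Matrix.mulVec_sub, Matrix.mulVec_add, Matrix.mulVec_smul, hcanV, hXV,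
      dotProduct_sub, dotProduct_add, dotProduct_smul, smul_eq_mul,
      sW, sDW, ← hqVdef]
    ring
  -- adjoint relations for the complexified interpolation operators
  have hadj1' : Ivubᵀ * HUΓ = HVΓ * Iuvg := by
    have h := congrArg Matrix.transpose hadj1
    rw [Matrix.transpose_mul, Matrix.transpose_mul, Matrix.transpose_transpose,
      real_symm hHUΓ.1, real_symm hHVΓ.1] at h
    exact h
  have hadj2' : Iuvbᵀ * HVΓ = HUΓ * Ivug := by
    have h := congrArg Matrix.transpose hadj2
    rw [Matrix.transpose_mul, Matrix.transpose_mul, Matrix.transpose_transpose,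
      real_symm hHUΓ.1, real_symm hHVΓ.1] at h
    exact h.symm
  have hPG : Pᴴ * G = K * S := by
    rw [hPdef, hGdef, hKdef, hSdef, cm_conjTranspose, ← cm_mul, ← cm_mul, hadj2]
  have hQG : Qᴴ * G = K * R := by
    rw [hQdef, hGdef, hKdef, hRdef, cm_conjTranspose, ← cm_mul, ← cm_mul, hadj1']
  have hRK : Rᴴ * K = G * Q := by
    rw [hRdef, hKdef, hGdef, hQdef, cm_conjTranspose, ← cm_mul, ← cm_mul, hadj1]
  have hSK : Sᴴ * K = G * P := by
    rw [hSdef, hKdef, hGdef, hPdef, cm_conjTranspose, ← cm_mul, ← cm_mul, hadj2']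
  -- conjugates of the interface atoms
  have c1 : conj (star U0 ⬝ᵥ G *ᵥ U1) = star U1 ⬝ᵥ G *ᵥ U0 := by rw [conj_form, hGh]
  have c2 : conj (star U1 ⬝ᵥ G *ᵥ U0) = star U0 ⬝ᵥ G *ᵥ U1 := by rw [conj_form, hGh]
  have c3 : conj (star U1 ⬝ᵥ G *ᵥ (P *ᵥ V0)) = star V0 ⬝ᵥ K *ᵥ (S *ᵥ U1) := by
    rw [conj_form, hGh, Matrix.star_mulVec, ← Matrix.dotProduct_mulVec,
      Matrix.mulVec_mulVec, hPG, ← Matrix.mulVec_mulVec]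
  have c4 : conj (star U0 ⬝ᵥ G *ᵥ (Q *ᵥ V1)) = star V1 ⬝ᵥ K *ᵥ (R *ᵥ U0) := by
    rw [conj_form, hGh, Matrix.star_mulVec, ← Matrix.dotProduct_mulVec,
      Matrix.mulVec_mulVec, hQG, ← Matrix.mulVec_mulVec]
  have c5 : conj (star V0 ⬝ᵥ K *ᵥ V1) = star V1 ⬝ᵥ K *ᵥ V0 := by rw [conj_form, hKh]
  have c6 : conj (star V1 ⬝ᵥ K *ᵥ V0) = star V0 ⬝ᵥ K *ᵥ V1 := by rw [conj_form, hKh]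
  have c7 : conj (star V1 ⬝ᵥ K *ᵥ (R *ᵥ U0)) = star U0 ⬝ᵥ G *ᵥ (Q *ᵥ V1) := by
    rw [conj_form, hKh, Matrix.star_mulVec, ← Matrix.dotProduct_mulVec,
      Matrix.mulVec_mulVec, hRK, ← Matrix.mulVec_mulVec]
  have c8 : conj (star V0 ⬝ᵥ K *ᵥ (S *ᵥ U1)) = star U1 ⬝ᵥ G *ᵥ (P *ᵥ V0) := by
    rw [conj_form, hKh, Matrix.star_mulVec, ← Matrix.dotProduct_mulVec,
      Matrix.mulVec_mulVec, hSK, ← Matrix.mulVec_mulVec]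
  have cqU : conj qU = qU := by rw [hqUdef, conj_form, hMUh]
  have cqV : conj qV = qV := by rw [hqVdef, conj_form, hMVh]
  -- hermitian swap of the transposed rate terms
  have hswapU : star Fu ⬝ᵥ cm HU *ᵥ U = conj (star U ⬝ᵥ cm HU *ᵥ Fu) := by
    rw [conj_form, hHUh]
  have hswapV : star Fv ⬝ᵥ cm HV *ᵥ V = conj (star V ⬝ᵥ cm HV *ᵥ Fv) := by
    rw [conj_form, hHVh]
  -- the key energy identity
  have key : star Fu ⬝ᵥ cm HU *ᵥ U + star U ⬝ᵥ cm HU *ᵥ Fu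
      + (star Fv ⬝ᵥ cm HV *ᵥ V + star V ⬝ᵥ cm HV *ᵥ Fv)
      = -((a + conj a) * qU) - (b + conj b) * qV := by
    rw [hswapU, hswapV, hTu, hTv]
    simp only [map_sub, map_add, _root_.map_mul, map_div₀, _root_.map_one, map_ofNat,
      Complex.conj_conj, c1, c2, c3, c4, c5, c6, c7, c8, cqU, cqV]
    ring
  constructor
  · have hd := (deriv_quad (cm HU) hu').add (deriv_quad (cm HV) hv')
    rw [← hUdef, ← hVdef] at hd
    rw [key] at hd
    exact hd
  · have h1 : (0:ℂ) ≤ (a + conj a) * qU := by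
      apply mul_nonneg
      · rw [Complex.add_conj]
        exact Complex.zero_le_real.mpr (by linarith)
      · exact (cm_posSemidef hMU).dotProduct_mulVec_nonneg U
    have h2 : (0:ℂ) ≤ (b + conj b) * qV := by
      apply mul_nonneg
      · rw [Complex.add_conj]
        exact Complex.zero_le_real.mpr (by linarith)
      · exact (cm_posSemidef hMV).dotProduct_mulVec_nonneg V
    have heq : -((a + conj a) * qU) - (b + conj b) * qV
        = -((a + conj a) * qU + (b + conj b) * qV) := by ring
    rw [heq]
    exact neg_nonpos.mpr (add_nonneg h1 h2)
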